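/- For α > -1, s > 0, and n ≥ 1, the integral b_n^{(α)}(s,x) := ∫₀ˣ y^α e^{-sy} L_n^{(α)}(y) dy satisfies b_n^{(α)}(s,x) = (1/n) e^{-sx} x^{α+1} L_{n-1}^{(α+1)}(x) + ((s−1)/n) b_{n-1}^{(α+1)}(s,x), with b_0^{(α)}(s,x) = s^{-(α+1)} γ(α+1, sx). -/

import Mathlib

open MeasureTheory intervalIntegral

noncomputable def laguerre (α : ℝ) (n : ℕ) (x : ℝ) : ℝ :=
  ∑ k ∈ Finset.range (n + 1),
    (-1 : ℝ) ^ k * Real.Gamma (α + n + 1) /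
      (Real.Gamma (α + k + 1) * (Nat.factorial (n - k)) * (Nat.factorial k)) * x ^ k

/-- `b_n^{(α)}(s, x) = ∫₀ˣ y^α e^{-s y} L_n^{(α)}(y) dy`. -/
noncomputable def laguerreB (α : ℝ) (n : ℕ) (s x : ℝ) : ℝ :=
  ∫ y in (0 : ℝ)..x, y ^ α * Real.exp (-(s * y)) * laguerre α n y

/-- The lower incomplete gamma function `γ(a, z) = ∫₀ᶻ e^{-t} t^{a-1} dt`. -/
noncomputable def lowerGamma (a z : ℝ) : ℝ :=
  ∫ t in (0 : ℝ)..z, Real.exp (-t) * t ^ (a - 1)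

noncomputable def lc (α : ℝ) (n k : ℕ) : ℝ :=
  (-1 : ℝ) ^ k * Real.Gamma (α + n + 1) /
    (Real.Gamma (α + k + 1) * (Nat.factorial (n - k)) * (Nat.factorial k))

lemma laguerre_eq (α : ℝ) (n : ℕ) (y : ℝ) :
    laguerre α n y = ∑ k ∈ Finset.range (n + 1), lc α n k * y ^ k := rfl

lemma coeff_zero (α : ℝ) (hα : -1 < α) (m : ℕ) :
    lc (α+1) m 0 * (α + 1) = ((m:ℝ)+1) * lc α (m+1) 0 := by
  have h1 : Real.Gamma (α + 1 + 1) = (α+1) * Real.Gamma (α + 1) := by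
    rw [Real.Gamma_add_one (by linarith)]
  have h2 : Real.Gamma (α + 1 + (m:ℝ) + 1) = Real.Gamma (α + ((m:ℝ)+1) + 1) := by ring_nf
  have hg1 : Real.Gamma (α+1) ≠ 0 := ne_of_gt (Real.Gamma_pos_of_pos (by linarith))
  have hf : ((Nat.factorial (m+1) : ℕ) : ℝ) = ((m:ℝ)+1) * (Nat.factorial m : ℝ) := by
    rw [Nat.factorial_succ]; push_cast; ring
  have hfm : ((Nat.factorial m : ℕ) : ℝ) ≠ 0 := Nat.cast_ne_zero.mpr (Nat.factorial_ne_zero m)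
  simp only [lc, Nat.sub_zero, Nat.factorial_zero, Nat.cast_zero, add_zero, Nat.cast_one,
    mul_one, pow_zero]
  push_cast
  have ha : α + 1 ≠ 0 := by linarith
  have hm1 : ((m:ℝ)+1) ≠ 0 := by positivity
  rw [h2, hf, h1]
  field_simp

lemma coeff_top (α : ℝ) (hα : -1 < α) (m : ℕ) :
    (0:ℝ) = ((m:ℝ)+1) * lc α (m+1) (m+1) + lc (α+1) m m := by
  have h2 : Real.Gamma (α + 1 + (m:ℝ) + 1) = Real.Gamma (α + ((m:ℝ)+1) + 1) := by ring_nf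
  have hg : Real.Gamma (α + ((m:ℝ)+1) + 1) ≠ 0 :=
    ne_of_gt (Real.Gamma_pos_of_pos (by have : (0:ℝ) ≤ m := Nat.cast_nonneg m; linarith))
  have hf : ((Nat.factorial (m+1) : ℕ) : ℝ) = ((m:ℝ)+1) * (Nat.factorial m : ℝ) := by
    rw [Nat.factorial_succ]; push_cast; ring
  have hfm : ((Nat.factorial m : ℕ) : ℝ) ≠ 0 := Nat.cast_ne_zero.mpr (Nat.factorial_ne_zero m)
  have hm1 : ((m:ℝ)+1) ≠ 0 := by positivity
  simp only [lc, Nat.sub_self, Nat.factorial_zero, Nat.cast_one, one_mul]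
  push_cast
  rw [h2, hf]
  field_simp
  ring

lemma coeff_mid (α : ℝ) (hα : -1 < α) (m j : ℕ) (hj : j < m) :
    lc (α+1) m (j+1) * (α + (j:ℝ) + 2) =
      ((m:ℝ)+1) * lc α (m+1) (j+1) + lc (α+1) m j := by
  obtain ⟨r, rfl⟩ : ∃ r, m = j + 1 + r := ⟨m - j - 1, by omega⟩
  have e1 : j + 1 + r - (j + 1) = r := by omega
  have e2 : j + 1 + r + 1 - (j + 1) = r + 1 := by omega
  have e3 : j + 1 + r - j = r + 1 := by omega
  have hgj : Real.Gamma (α + (j:ℝ) + 2) ≠ 0 :=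
    ne_of_gt (Real.Gamma_pos_of_pos (by have : (0:ℝ) ≤ j := Nat.cast_nonneg j; linarith))
  have hG : Real.Gamma (α + 1 + ((j:ℝ)+1) + 1) = (α + (j:ℝ) + 2) * Real.Gamma (α + (j:ℝ) + 2) := by
    rw [show α + 1 + ((j:ℝ)+1) + 1 = (α + (j:ℝ) + 2) + 1 by ring,
      Real.Gamma_add_one (by have : (0:ℝ) ≤ j := Nat.cast_nonneg j; linarith)]
  have hG2 : Real.Gamma (α + ((j:ℝ)+1) + 1) = Real.Gamma (α + (j:ℝ) + 2) := by ring_nf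
  have hG3 : Real.Gamma (α + 1 + ((j:ℝ)+1+(r:ℝ)) + 1)
      = Real.Gamma (α + ((j:ℝ)+1+(r:ℝ)+1) + 1) := by ring_nf
  have haj : α + (j:ℝ) + 2 ≠ 0 := by have : (0:ℝ) ≤ j := Nat.cast_nonneg j; linarith
  have hfr : ((Nat.factorial (r+1) : ℕ) : ℝ) = ((r:ℝ)+1) * (Nat.factorial r : ℝ) := by
    rw [Nat.factorial_succ]; push_cast; ring
  have hfj : ((Nat.factorial (j+1) : ℕ) : ℝ) = ((j:ℝ)+1) * (Nat.factorial j : ℝ) := by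
    rw [Nat.factorial_succ]; push_cast; ring
  have hfrne : ((Nat.factorial r : ℕ) : ℝ) ≠ 0 := Nat.cast_ne_zero.mpr (Nat.factorial_ne_zero r)
  have hfjne : ((Nat.factorial j : ℕ) : ℝ) ≠ 0 := Nat.cast_ne_zero.mpr (Nat.factorial_ne_zero j)
  have hr1 : ((r:ℝ)+1) ≠ 0 := by positivity
  have hj1 : ((j:ℝ)+1) ≠ 0 := by positivity
  simp only [lc, e1, e2, e3]
  push_cast
  have hG4 : Real.Gamma (α + 1 + (j:ℝ) + 1) = Real.Gamma (α + (j:ℝ) + 2) := by ring_nf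
  rw [hG3, hG, hG2, hG4, hfr, hfj]
  generalize Real.Gamma (α + ((j:ℝ) + 1 + (r:ℝ) + 1) + 1) = N
  generalize hu : Real.Gamma (α + (j:ℝ) + 2) = u at hgj
  generalize hv : ((Nat.factorial r : ℕ) : ℝ) = v at hfrne
  generalize hw : ((Nat.factorial j : ℕ) : ℝ) = w at hfjne
  field_simp
  ring

lemma sum_id (α : ℝ) (hα : -1 < α) (m : ℕ) (y : ℝ) :
    ∑ k ∈ Finset.range (m+1), lc (α+1) m k * ((α + (k:ℝ) + 1) * y ^ k)
      = ((m:ℝ)+1) * ∑ k ∈ Finset.range (m+2), lc α (m+1) k * y ^ k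
        + y * ∑ k ∈ Finset.range (m+1), lc (α+1) m k * y ^ k := by
  have h1 : ((m:ℝ)+1) * ∑ k ∈ Finset.range (m+2), lc α (m+1) k * y ^ k
      = ∑ k ∈ Finset.range (m+2), ((m:ℝ)+1) * lc α (m+1) k * y ^ k := by
    rw [Finset.mul_sum]; exact Finset.sum_congr rfl fun k _ => by ring
  have h2 : y * ∑ k ∈ Finset.range (m+1), lc (α+1) m k * y ^ k
      = ∑ k ∈ Finset.range (m+1), lc (α+1) m k * y ^ (k+1) := by
    rw [Finset.mul_sum]; exact Finset.sum_congr rfl fun k _ => by ring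
  rw [h1, h2,
    Finset.sum_range_succ' (fun k => ((m:ℝ)+1) * lc α (m+1) k * y ^ k) (m+1),
    Finset.sum_range_succ' (fun k => lc (α+1) m k * ((α + (k:ℝ) + 1) * y ^ k)) m,
    Finset.sum_range_succ (fun i => ((m:ℝ)+1) * lc α (m+1) (i+1) * y ^ (i+1)) m,
    Finset.sum_range_succ (fun i => lc (α+1) m i * y ^ (i+1)) m]
  have hmid : ∑ i ∈ Finset.range m, lc (α+1) m (i+1) * ((α + ((i:ℕ)+1 : ℕ) + 1) * y ^ (i+1))
      = ∑ i ∈ Finset.range m, (((m:ℝ)+1) * lc α (m+1) (i+1) * y ^ (i+1)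
          + lc (α+1) m i * y ^ (i+1)) := by
    refine Finset.sum_congr rfl fun i hi => ?_
    have hi' : i < m := Finset.mem_range.mp hi
    have := coeff_mid α hα m i hi'
    push_cast
    calc lc (α+1) m (i+1) * ((α + ((i:ℝ)+1) + 1) * y ^ (i+1))
        = (lc (α+1) m (i+1) * (α + (i:ℝ) + 2)) * y ^ (i+1) := by ring
      _ = (((m:ℝ)+1) * lc α (m+1) (i+1) + lc (α+1) m i) * y ^ (i+1) := by rw [this]
      _ = _ := by ring
  rw [hmid, Finset.sum_add_distrib]
  have htop := coeff_top α hα m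
  have hzero := coeff_zero α hα m
  push_cast
  linear_combination y ^ 0 * hzero + y ^ (m+1) * htop

lemma hasDeriv_main (α : ℝ) (hα : -1 < α) (s : ℝ) (m : ℕ) {y : ℝ} (hy : 0 < y) :
    HasDerivAt (fun t : ℝ => Real.exp (-(s*t)) * t ^ (α+1) * laguerre (α+1) m t)
      (((m:ℝ)+1) * (y ^ α * Real.exp (-(s*y)) * laguerre α (m+1) y)
        - (s-1) * (y ^ (α+1) * Real.exp (-(s*y)) * laguerre (α+1) m y)) y := by
  have hF : ∀ k ∈ Finset.range (m+1), HasDerivAt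
      (fun t : ℝ => lc (α+1) m k * (Real.exp (-(s*t)) * t ^ (α+1+(k:ℝ))))
      (lc (α+1) m k * (Real.exp (-(s*y)) * (-s) * y ^ (α+1+(k:ℝ))
        + Real.exp (-(s*y)) * ((α+1+(k:ℝ)) * y ^ (α+(k:ℝ))))) y := by
    intro k _
    have he : HasDerivAt (fun t : ℝ => Real.exp (-(s*t))) (Real.exp (-(s*y)) * (-s)) y := by
      have h : HasDerivAt (fun t : ℝ => -(s*t)) (-s) y := by
        simpa using ((hasDerivAt_id y).const_mul s).fun_neg
      exact h.exp
    have hr : HasDerivAt (fun t : ℝ => t ^ (α+1+(k:ℝ))) ((α+1+(k:ℝ)) * y ^ (α+(k:ℝ))) y := by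
      have h := Real.hasDerivAt_rpow_const (x := y) (p := α+1+(k:ℝ)) (Or.inl hy.ne')
      simpa [show α+1+(k:ℝ)-1 = α+(k:ℝ) by ring] using h
    exact (he.mul hr).const_mul _
  have hsum : HasDerivAt
      (fun t : ℝ => ∑ k ∈ Finset.range (m+1),
        lc (α+1) m k * (Real.exp (-(s*t)) * t ^ (α+1+(k:ℝ))))
      (∑ k ∈ Finset.range (m+1), lc (α+1) m k * (Real.exp (-(s*y)) * (-s) * y ^ (α+1+(k:ℝ))
        + Real.exp (-(s*y)) * ((α+1+(k:ℝ)) * y ^ (α+(k:ℝ))))) y := HasDerivAt.fun_sum hF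
  have heq : (fun t : ℝ => Real.exp (-(s*t)) * t ^ (α+1) * laguerre (α+1) m t)
      =ᶠ[nhds y] (fun t : ℝ => ∑ k ∈ Finset.range (m+1),
        lc (α+1) m k * (Real.exp (-(s*t)) * t ^ (α+1+(k:ℝ)))) := by
    filter_upwards [isOpen_Ioi.mem_nhds (Set.mem_Ioi.mpr hy)] with t ht
    have ht : (0:ℝ) < t := ht
    rw [laguerre_eq, Finset.mul_sum]
    refine Finset.sum_congr rfl fun k _ => ?_
    rw [Real.rpow_add ht (α+1) (k:ℝ), Real.rpow_natCast]
    ring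
  have hval : (∑ k ∈ Finset.range (m+1), lc (α+1) m k *
        (Real.exp (-(s*y)) * (-s) * y ^ (α+1+(k:ℝ))
          + Real.exp (-(s*y)) * ((α+1+(k:ℝ)) * y ^ (α+(k:ℝ)))))
      = ((m:ℝ)+1) * (y ^ α * Real.exp (-(s*y)) * laguerre α (m+1) y)
        - (s-1) * (y ^ (α+1) * Real.exp (-(s*y)) * laguerre (α+1) m y) := by
    have e1 : ∀ k:ℕ, y^(α+1+(k:ℝ)) = y^α * y * (y:ℝ)^(k:ℕ) := by
      intro k
      rw [Real.rpow_add hy, Real.rpow_add hy, Real.rpow_one, Real.rpow_natCast]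
    have e2 : ∀ k:ℕ, y^(α+(k:ℝ)) = y^α * (y:ℝ)^(k:ℕ) := by
      intro k
      rw [Real.rpow_add hy, Real.rpow_natCast]
    calc (∑ k ∈ Finset.range (m+1), lc (α+1) m k *
          (Real.exp (-(s*y)) * (-s) * y ^ (α+1+(k:ℝ))
            + Real.exp (-(s*y)) * ((α+1+(k:ℝ)) * y ^ (α+(k:ℝ)))))
        = ∑ k ∈ Finset.range (m+1),
            ((Real.exp (-(s*y)) * y^α) * (lc (α+1) m k * ((α + (k:ℝ) + 1) * y^k))
              + ((-s) * (Real.exp (-(s*y)) * y^α * y)) * (lc (α+1) m k * y^k)) := by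
          refine Finset.sum_congr rfl fun k _ => ?_
          rw [e1 k, e2 k]; ring
      _ = (Real.exp (-(s*y)) * y^α) *
            (∑ k ∈ Finset.range (m+1), lc (α+1) m k * ((α + (k:ℝ) + 1) * y^k))
          + ((-s) * (Real.exp (-(s*y)) * y^α * y)) *
            (∑ k ∈ Finset.range (m+1), lc (α+1) m k * y^k) := by
          rw [Finset.sum_add_distrib, Finset.mul_sum, Finset.mul_sum]
      _ = _ := by
          rw [sum_id α hα m y, laguerre_eq, laguerre_eq,
            show α + 1 = α + (1:ℝ) from rfl, Real.rpow_add hy, Real.rpow_one]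
          ring
  rw [← hval]
  exact hsum.congr_of_eventuallyEq heq

theorem laguerreB_recursion (α : ℝ) (hα : -1 < α) (s : ℝ) (hs : 0 < s)
    (x : ℝ) (hx : 0 < x) :
    laguerreB α 0 s x = s ^ (-(α + 1)) * lowerGamma (α + 1) (s * x) ∧
      ∀ n : ℕ, 1 ≤ n →
        laguerreB α n s x =
          (1 / (n : ℝ)) * Real.exp (-(s * x)) * x ^ (α + 1) * laguerre (α + 1) (n - 1) x +
            ((s - 1) / (n : ℝ)) * laguerreB (α + 1) (n - 1) s x := by
  constructor
  · -- base case
    have hg1 : Real.Gamma (α+1) ≠ 0 := ne_of_gt (Real.Gamma_pos_of_pos (by linarith))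
    have h0 : ∀ y:ℝ, laguerre α 0 y = 1 := by
      intro y
      simp [laguerre, div_self, hg1]
    have hB : laguerreB α 0 s x = ∫ y in (0:ℝ)..x, y ^ α * Real.exp (-(s*y)) := by
      simp only [laguerreB, h0, mul_one]
    have hlg : lowerGamma (α+1) (s*x) = ∫ t in (0:ℝ)..(s*x), Real.exp (-t) * t ^ α := by
      simp only [lowerGamma, add_sub_cancel_right]
    have h2 : (∫ t in (0:ℝ)..(s*x), Real.exp (-t) * t ^ α)
        = s * ∫ y in (0:ℝ)..x, Real.exp (-(s*y)) * (s*y) ^ α := by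
      have h := intervalIntegral.smul_integral_comp_mul_left (a := (0:ℝ)) (b := x)
        (f := fun t => Real.exp (-t) * t ^ α) s
      simp only [smul_eq_mul, mul_zero] at h
      exact h.symm
    have h3 : (∫ y in (0:ℝ)..x, Real.exp (-(s*y)) * (s*y) ^ α)
        = s ^ α * ∫ y in (0:ℝ)..x, y ^ α * Real.exp (-(s*y)) := by
      rw [← intervalIntegral.integral_const_mul]
      refine intervalIntegral.integral_congr fun y hy => ?_
      rw [Set.uIcc_of_le hx.le] at hy
      rw [Real.mul_rpow hs.le hy.1]
      ring
    have hpow : s ^ (-(α+1)) * (s * s ^ α) = 1 := by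
      have h4 : s * s^α = s^(1+α) := by rw [Real.rpow_add hs, Real.rpow_one]
      rw [h4, ← Real.rpow_add hs, show -(α+1) + (1+α) = (0:ℝ) by ring, Real.rpow_zero]
    rw [hB, hlg, h2, h3,
      show s ^ (-(α+1)) * (s * (s ^ α * ∫ y in (0:ℝ)..x, y ^ α * Real.exp (-(s*y))))
        = (s ^ (-(α+1)) * (s * s ^ α)) * ∫ y in (0:ℝ)..x, y ^ α * Real.exp (-(s*y)) by ring,
      hpow, one_mul]
  · -- recursion
    intro n hn
    obtain ⟨m, rfl⟩ : ∃ m, n = m + 1 := ⟨n - 1, by omega⟩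
    simp only [Nat.add_sub_cancel]
    have hcontL : ∀ (β : ℝ) (p : ℕ), Continuous fun t : ℝ => laguerre β p t := by
      intro β p
      exact continuous_finset_sum _ fun k _ => (continuous_const.mul (continuous_pow k))
    have hcontE : Continuous fun t : ℝ => Real.exp (-(s*t)) :=
      Real.continuous_exp.comp (continuous_const.mul continuous_id).neg
    -- interval integrability of the two integrands
    have I1 : IntervalIntegrable
        (fun y : ℝ => y ^ α * Real.exp (-(s*y)) * laguerre α (m+1) y) volume 0 x := by
      have h := (intervalIntegrable_rpow' (a := (0:ℝ)) (b := x) hα).mul_continuousOn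
        (g := fun y : ℝ => Real.exp (-(s*y)) * laguerre α (m+1) y)
        ((hcontE.mul (hcontL α (m+1))).continuousOn)
      simpa [mul_assoc] using h
    have I2 : IntervalIntegrable
        (fun y : ℝ => y ^ (α+1) * Real.exp (-(s*y)) * laguerre (α+1) m y) volume 0 x := by
      have h := (intervalIntegrable_rpow' (a := (0:ℝ)) (b := x) (by linarith : (-1:ℝ) < α+1)).mul_continuousOn
        (g := fun y : ℝ => Real.exp (-(s*y)) * laguerre (α+1) m y)
        ((hcontE.mul (hcontL (α+1) m)).continuousOn)
      simpa [mul_assoc] using h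
    have hint : IntervalIntegrable
        (fun y : ℝ => ((m:ℝ)+1) * (y ^ α * Real.exp (-(s*y)) * laguerre α (m+1) y)
          - (s-1) * (y ^ (α+1) * Real.exp (-(s*y)) * laguerre (α+1) m y)) volume 0 x :=
      (I1.const_mul _).sub (I2.const_mul _)
    have hcontG : ContinuousOn
        (fun t : ℝ => Real.exp (-(s*t)) * t ^ (α+1) * laguerre (α+1) m t) (Set.Icc 0 x) := by
      refine ContinuousOn.mul (ContinuousOn.mul hcontE.continuousOn ?_) (hcontL (α+1) m).continuousOn
      intro t _
      exact (Real.continuousAt_rpow_const t (α+1) (Or.inr (by linarith))).continuousWithinAt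
    have hftc := intervalIntegral.integral_eq_sub_of_hasDerivAt_of_le hx.le hcontG
      (fun y hy => hasDeriv_main α hα s m hy.1) hint
    have hG0 : Real.exp (-(s*0)) * (0:ℝ) ^ (α+1) * laguerre (α+1) m 0 = 0 := by
      rw [Real.zero_rpow (by linarith : α + 1 ≠ 0)]
      ring
    rw [hG0, sub_zero] at hftc
    have hsplit : (∫ y in (0:ℝ)..x,
        (((m:ℝ)+1) * (y ^ α * Real.exp (-(s*y)) * laguerre α (m+1) y)
          - (s-1) * (y ^ (α+1) * Real.exp (-(s*y)) * laguerre (α+1) m y)))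
        = ((m:ℝ)+1) * laguerreB α (m+1) s x - (s-1) * laguerreB (α+1) m s x := by
      rw [intervalIntegral.integral_sub (I1.const_mul _) (I2.const_mul _),
        intervalIntegral.integral_const_mul, intervalIntegral.integral_const_mul]
      rfl
    rw [hsplit] at hftc
    have hm1 : ((m:ℝ)+1) ≠ 0 := by positivity
    push_cast
    have : laguerreB α (m+1) s x
        = (1/((m:ℝ)+1)) * (Real.exp (-(s*x)) * x ^ (α+1) * laguerre (α+1) m x)
          + ((s-1)/((m:ℝ)+1)) * laguerreB (α+1) m s x := by
      field_simp
      linarith [hftc]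
    rw [show ((m:ℕ):ℝ) + 1 = (((m+1:ℕ)):ℝ) by push_cast; ring] at this
    push_cast at this
    rw [this]
    ring
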